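/- Let F be the free group on four generators x₁, x₂, x₃, x₄, let R_i be the normal closure of x_i for i = 1, 2, 3, 4, and let R₀ be the normal closure of x₁x₂x₃x₄. Then the element w = [[[x₁, x₂], [x₁, x₂x₃]], [[x₁, x₂], [x₁, x₂x₃x₄]]] belongs to R₀ ∩ R₁ ∩ R₂ ∩ R₃ ∩ R₄. -/
import Mathlib


/-- The left-normed iterated commutator subgroup
`[N₁, …, N_k] = [[…[[N₁, N₂], N₃]…], N_k]` of a list of subgroups. -/
def iterComm {G : Type*} [Group G] : List (Subgroup G) → Subgroup G
  | [] => ⊥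
  | N :: l => l.foldl (fun A B => ⁅A, B⁆) N

/-- The symmetric commutator subgroup `[N₁, …, N_k]_S`: the subgroup generated by all
left-normed iterated commutator subgroups `[N_{σ(1)}, …, N_{σ(k)}]` over permutations `σ`. -/
def symmComm {G : Type*} [Group G] {k : ℕ} (N : Fin k → Subgroup G) : Subgroup G :=
  ⨆ σ : Equiv.Perm (Fin k), iterComm (List.ofFn fun i => N (σ i))

/-- In the free group on `n` generators `x₁, …, xₙ` (indexed by `Fin n`), `R n 0` is the
normal closure of the product `x₁x₂⋯xₙ`, and `R n i` for `i ≠ 0` is the normal closure of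
the generator `x_i`. -/
def R (n : ℕ) (i : Fin (n + 1)) : Subgroup (FreeGroup (Fin n)) :=
  if h : i = 0 then
    Subgroup.normalClosure {(List.ofFn fun j : Fin n => FreeGroup.of j).prod}
  else
    Subgroup.normalClosure {FreeGroup.of (i.pred h)}


/-- The commutator `[u, v] = u⁻¹v⁻¹uv` of two group elements. -/
def commE {G : Type*} [Group G] (u v : G) : G := u⁻¹ * v⁻¹ * u * v

/-- If a substitution `φ = lift f` kills `g` and agrees with the identity modulo `N`,
then `g ∈ N`. -/
lemma mem_of_lift_eq_one {α : Type*} (N : Subgroup (FreeGroup α)) [N.Normal]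
    (f : α → FreeGroup α)
    (h : ∀ a, (QuotientGroup.mk' N) (f a) = QuotientGroup.mk' N (FreeGroup.of a))
    (g : FreeGroup α) (hg : FreeGroup.lift f g = 1) : g ∈ N := by
  have key : (QuotientGroup.mk' N).comp (FreeGroup.lift f) = QuotientGroup.mk' N := by
    apply FreeGroup.ext_hom
    intro a
    simpa using h a
  have h2 := congrArg (fun φ : FreeGroup α →* _ => φ g) key
  simp only [MonoidHom.comp_apply] at h2
  have h1 : (QuotientGroup.mk' N) g = 1 := by rw [← h2, hg, map_one]
  exact (QuotientGroup.eq_one_iff g).mp h1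

/-- In the free group on four generators `x₁, x₂, x₃, x₄` (with `x_{i+1} = FreeGroup.of i`),
the element `w = [[[x₁, x₂], [x₁, x₂x₃]], [[x₁, x₂], [x₁, x₂x₃x₄]]]` belongs to
`R₀ ∩ R₁ ∩ R₂ ∩ R₃ ∩ R₄`, where `R_i` is the normal closure of `x_i` and `R₀` is the
normal closure of `x₁x₂x₃x₄`. -/
theorem generator_mem_iInf :
    commE
        (commE (commE (FreeGroup.of 0) (FreeGroup.of 1))
          (commE (FreeGroup.of 0) (FreeGroup.of 1 * FreeGroup.of (2 : Fin 4))))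
        (commE (commE (FreeGroup.of 0) (FreeGroup.of 1))
          (commE (FreeGroup.of 0)
            (FreeGroup.of 1 * FreeGroup.of 2 * FreeGroup.of (3 : Fin 4)))) ∈
      R 4 0 ⊓ R 4 1 ⊓ R 4 2 ⊓ R 4 3 ⊓ R 4 4 := by
  have hR0 : R 4 0 = Subgroup.normalClosure
      {FreeGroup.of 0 * FreeGroup.of 1 * FreeGroup.of 2 * FreeGroup.of (3 : Fin 4)} := by
    rw [R, dif_pos rfl]
    congr 1
  have hR1 : R 4 1 = Subgroup.normalClosure {FreeGroup.of (0 : Fin 4)} := by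
    rw [R, dif_neg (by decide)]; rfl
  have hR2 : R 4 2 = Subgroup.normalClosure {FreeGroup.of (1 : Fin 4)} := by
    rw [R, dif_neg (by decide)]; rfl
  have hR3 : R 4 3 = Subgroup.normalClosure {FreeGroup.of (2 : Fin 4)} := by
    rw [R, dif_neg (by decide)]; rfl
  have hR4 : R 4 4 = Subgroup.normalClosure {FreeGroup.of (3 : Fin 4)} := by
    rw [R, dif_neg (by decide)]; rfl
  refine ⟨⟨⟨⟨?_, ?_⟩, ?_⟩, ?_⟩, ?_⟩
  · rw [hR0]
    apply mem_of_lift_eq_one _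
      ![FreeGroup.of 0, FreeGroup.of 1, FreeGroup.of 2,
        (FreeGroup.of 0 * FreeGroup.of 1 * FreeGroup.of 2)⁻¹]
    · intro a
      fin_cases a <;> simp
      rw [← QuotientGroup.mk_inv, ← QuotientGroup.mk_inv, ← QuotientGroup.mk_inv,
        ← QuotientGroup.mk_mul, ← QuotientGroup.mk_mul, QuotientGroup.eq]
      have hm : FreeGroup.of 0 * FreeGroup.of 1 * FreeGroup.of 2 * FreeGroup.of (3 : Fin 4) ∈
          Subgroup.normalClosure
            {FreeGroup.of 0 * FreeGroup.of 1 * FreeGroup.of 2 * FreeGroup.of (3 : Fin 4)} :=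
        Subgroup.subset_normalClosure rfl
      have he : ((FreeGroup.of 2)⁻¹ * ((FreeGroup.of 1)⁻¹ * (FreeGroup.of (0 : Fin 4))⁻¹))⁻¹ *
          FreeGroup.of 3 =
          FreeGroup.of 0 * FreeGroup.of 1 * FreeGroup.of 2 * FreeGroup.of 3 := by group
      rw [he]
      exact hm
    · simp only [commE, map_mul, map_inv, FreeGroup.lift_apply_of, Matrix.cons_val_zero,
        Matrix.cons_val_one, Matrix.head_cons, Matrix.cons_val_two, Matrix.tail_cons,
        Matrix.cons_val_three]
      group
  · rw [hR1]
    apply mem_of_lift_eq_one _ ![1, FreeGroup.of 1, FreeGroup.of 2, FreeGroup.of 3]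
    · intro a
      fin_cases a <;> simp
      symm
      rw [QuotientGroup.eq_one_iff]
      exact Subgroup.subset_normalClosure rfl
    · simp only [commE, map_mul, map_inv, FreeGroup.lift_apply_of, Matrix.cons_val_zero,
        Matrix.cons_val_one, Matrix.head_cons, Matrix.cons_val_two, Matrix.tail_cons,
        Matrix.cons_val_three]
      group
  · rw [hR2]
    apply mem_of_lift_eq_one _ ![FreeGroup.of 0, 1, FreeGroup.of 2, FreeGroup.of 3]
    · intro a
      fin_cases a <;> simp
      symm
      rw [QuotientGroup.eq_one_iff]
      exact Subgroup.subset_normalClosure rfl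
    · simp only [commE, map_mul, map_inv, FreeGroup.lift_apply_of, Matrix.cons_val_zero,
        Matrix.cons_val_one, Matrix.head_cons, Matrix.cons_val_two, Matrix.tail_cons,
        Matrix.cons_val_three]
      group
  · rw [hR3]
    apply mem_of_lift_eq_one _ ![FreeGroup.of 0, FreeGroup.of 1, 1, FreeGroup.of 3]
    · intro a
      fin_cases a <;> simp
      symm
      rw [QuotientGroup.eq_one_iff]
      exact Subgroup.subset_normalClosure rfl
    · simp only [commE, map_mul, map_inv, FreeGroup.lift_apply_of, Matrix.cons_val_zero,
        Matrix.cons_val_one, Matrix.head_cons, Matrix.cons_val_two, Matrix.tail_cons,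
        Matrix.cons_val_three]
      group
  · rw [hR4]
    apply mem_of_lift_eq_one _ ![FreeGroup.of 0, FreeGroup.of 1, FreeGroup.of 2, 1]
    · intro a
      fin_cases a <;> simp
      symm
      rw [QuotientGroup.eq_one_iff]
      exact Subgroup.subset_normalClosure rfl
    · simp only [commE, map_mul, map_inv, FreeGroup.lift_apply_of, Matrix.cons_val_zero,
        Matrix.cons_val_one, Matrix.head_cons, Matrix.cons_val_two, Matrix.tail_cons,
        Matrix.cons_val_three]
      group
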